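/- (Lemma 1 of the paper.) Fix n ≥ 1, positive integers p_1,…,p_n with p = p_1 + ⋯ + p_n, reals ρ_1,…,ρ_n > 0, κ > 0, a block-diagonal symmetric positive definite p × p matrix V = diag(V_1,…,V_n) with V_i of size p_i × p_i, a horizon T ≥ 0, matrices A_t (m × m), C_t (p × m), L_t (r × m), symmetric positive definite matrices W_t (m × m) and Σ̄_0 (m × m). For a nonzero real q × p matrix D with column blocks D_i ∈ ℝ^{q×p_i}, define Δ₂D = max_i ρ_i‖D_i‖₂, Π(D) = V⁻¹ − V⁻¹(V⁻¹ + DᵀD/(κ Δ₂D)²)⁻¹V⁻¹, and the covariance recursion Σ_0(D) = (Σ̄_0⁻¹ + C_0ᵀ Π(D) C_0)⁻¹, Σ_{t+1}(D) = ((A_t Σ_t(D) A_tᵀ + W_t)⁻¹ + C_{t+1}ᵀ Π(D) C_{t+1})⁻¹ for 0 ≤ t ≤ T−1. Then for every nonzero D there exists a nonzero real matrix D̃ with column blocks D̃_i satisfying ρ_i‖D̃_i‖₂ = Δ₂D̃ = Δ₂D for all 1 ≤ i ≤ n, such that Σ_t(D̃) ⪯ Σ_t(D) for all 0 ≤ t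 ≤ T, and hence Σ_{t=0}^{T} Tr(L_t Σ_t(D̃) L_tᵀ) ≤ Σ_{t=0}^{T} Tr(L_t Σ_t(D) L_tᵀ). -/

import Mathlib

open Matrix

/-- The induced 2-norm (largest singular value) of a real matrix. -/
noncomputable def sNorm {m n : Type*} [Fintype m] [Fintype n] [DecidableEq n]
    (M : Matrix m n ℝ) : ℝ :=
  ‖LinearMap.toContinuousLinearMap (Matrix.toEuclideanLin M)‖

/-- The `i`-th column block of a matrix with columns indexed by `(i : Fin n) × Fin (p i)`. -/
def blk {q n : ℕ} {p : Fin n → ℕ} (D : Matrix (Fin q) ((i : Fin n) × Fin (p i)) ℝ)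
    (i : Fin n) : Matrix (Fin q) (Fin (p i)) ℝ :=
  Matrix.of fun r j => D r ⟨i, j⟩

/-- The ℓ₂-sensitivity `Δ₂D = max_i ρ_i ‖D_i‖₂` of a block matrix `D`. -/
noncomputable def Delta2 {q n : ℕ} {p : Fin n → ℕ} (ρ : Fin n → ℝ)
    (D : Matrix (Fin q) ((i : Fin n) × Fin (p i)) ℝ) : ℝ :=
  ⨆ i : Fin n, ρ i * sNorm (blk D i)

/-- The signal-to-noise matrix
`Π(D) = V⁻¹ − V⁻¹ (V⁻¹ + DᵀD/(κ Δ₂D)²)⁻¹ V⁻¹`. -/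
noncomputable def PiOf {q n : ℕ} {p : Fin n → ℕ}
    (V : Matrix ((i : Fin n) × Fin (p i)) ((i : Fin n) × Fin (p i)) ℝ)
    (κ : ℝ) (ρ : Fin n → ℝ)
    (D : Matrix (Fin q) ((i : Fin n) × Fin (p i)) ℝ) :
    Matrix ((i : Fin n) × Fin (p i)) ((i : Fin n) × Fin (p i)) ℝ :=
  V⁻¹ - V⁻¹ * (V⁻¹ + ((κ * Delta2 ρ D) ^ 2)⁻¹ • (Dᵀ * D))⁻¹ * V⁻¹

/-- The Kalman filter error covariance recursion
`Σ₀ = (Σ̄₀⁻¹ + C₀ᵀ Π C₀)⁻¹`, `Σ_{t+1} = ((A_t Σ_t A_tᵀ + W_t)⁻¹ + C_{t+1}ᵀ Π C_{t+1})⁻¹`. -/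
noncomputable def SigSeq {m : ℕ} {P : Type*} [Fintype P] [DecidableEq P]
    (A W : ℕ → Matrix (Fin m) (Fin m) ℝ) (C : ℕ → Matrix P (Fin m) ℝ)
    (Sbar0 : Matrix (Fin m) (Fin m) ℝ) (Pi : Matrix P P ℝ) :
    ℕ → Matrix (Fin m) (Fin m) ℝ
  | 0 => (Sbar0⁻¹ + (C 0)ᵀ * Pi * C 0)⁻¹
  | t + 1 => ((A t * SigSeq A W C Sbar0 Pi t * (A t)ᵀ + W t)⁻¹
      + (C (t + 1))ᵀ * Pi * C (t + 1))⁻¹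

section Aux
lemma sNorm_nonneg {m n : Type*} [Fintype m] [Fintype n] [DecidableEq n]
    (M : Matrix m n ℝ) : 0 ≤ sNorm M := norm_nonneg _

lemma norm_apply_sq {m n : Type*} [Fintype m] [Fintype n] [DecidableEq n]
    (M : Matrix m n ℝ) (x : EuclideanSpace ℝ n) :
    ‖(LinearMap.toContinuousLinearMap (Matrix.toEuclideanLin M)) x‖ ^ 2
      = (WithLp.equiv 2 (n → ℝ) x) ⬝ᵥ ((Mᵀ * M) *ᵥ (WithLp.equiv 2 (n → ℝ) x)) := by
  set y := WithLp.equiv 2 (n → ℝ) x with hy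
  have h1 : ((LinearMap.toContinuousLinearMap (Matrix.toEuclideanLin M)) x : EuclideanSpace ℝ m)
      = (WithLp.equiv 2 (m → ℝ)).symm (M *ᵥ y) := by
    simp [Matrix.toEuclideanLin_apply, hy]
  have h2 : ‖((WithLp.equiv 2 (m → ℝ)).symm (M *ᵥ y) : EuclideanSpace ℝ m)‖ ^ 2
      = (M *ᵥ y) ⬝ᵥ (M *ᵥ y) := by
    rw [← real_inner_self_eq_norm_sq]
    rw [PiLp.inner_apply]
    simp [dotProduct, sq]
  rw [h1, h2, ← Matrix.mulVec_mulVec]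
  conv_rhs => rw [Matrix.dotProduct_mulVec, Matrix.vecMul_transpose]

lemma sNorm_eq_of_gram_eq {m₁ m₂ n : Type*} [Fintype m₁] [Fintype m₂] [Fintype n] [DecidableEq n]
    (M : Matrix m₁ n ℝ) (N : Matrix m₂ n ℝ) (h : Mᵀ * M = Nᵀ * N) : sNorm M = sNorm N := by
  have key : ∀ x : EuclideanSpace ℝ n,
      ‖(LinearMap.toContinuousLinearMap (Matrix.toEuclideanLin M)) x‖
        = ‖(LinearMap.toContinuousLinearMap (Matrix.toEuclideanLin N)) x‖ := by
    intro x
    have := norm_apply_sq M x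
    rw [h, ← norm_apply_sq N x] at this
    have := congrArg Real.sqrt this
    rwa [Real.sqrt_sq (norm_nonneg _), Real.sqrt_sq (norm_nonneg _)] at this
  apply le_antisymm
  · exact ContinuousLinearMap.opNorm_le_bound _ (norm_nonneg _) fun x => by
      rw [key]; exact ContinuousLinearMap.le_opNorm _ x
  · exact ContinuousLinearMap.opNorm_le_bound _ (norm_nonneg _) fun x => by
      rw [← key]; exact ContinuousLinearMap.le_opNorm _ x

lemma sNorm_abs_sub_le {m n : Type*} [Fintype m] [Fintype n] [DecidableEq n]
    (A B : Matrix m n ℝ) : |sNorm A - sNorm B| ≤ sNorm (A - B) := by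
  have h : LinearMap.toContinuousLinearMap (Matrix.toEuclideanLin (A - B))
      = LinearMap.toContinuousLinearMap (Matrix.toEuclideanLin A)
        - LinearMap.toContinuousLinearMap (Matrix.toEuclideanLin B) := by
    ext x; simp [map_sub]
  unfold sNorm
  rw [h]
  exact abs_norm_sub_norm_le _ _

lemma sNorm_pos_of_ne_zero {m n : Type*} [Fintype m] [Fintype n] [DecidableEq n]
    {M : Matrix m n ℝ} (hM : M ≠ 0) : 0 < sNorm M := by
  rcases lt_or_eq_of_le (sNorm_nonneg M) with h | h
  · exact h
  · exfalso
    apply hM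
    have h0 : LinearMap.toContinuousLinearMap (Matrix.toEuclideanLin M) = 0 :=
      norm_eq_zero.mp h.symm
    have h1 : Matrix.toEuclideanLin M = 0 :=
      (map_eq_zero_iff _ (LinearEquiv.injective LinearMap.toContinuousLinearMap)).mp h0
    exact (map_eq_zero_iff _ (LinearEquiv.injective Matrix.toEuclideanLin)).mp h1

lemma abs_le_sNorm_of_unit {m n : Type*} [Fintype m] [Fintype n] [DecidableEq n]
    (M : Matrix m n ℝ) (j : n) (i : m) : |M i j| ≤ sNorm M := by
  have hx : ‖(EuclideanSpace.single j (1:ℝ) : EuclideanSpace ℝ n)‖ = 1 := by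
    simp [EuclideanSpace.norm_single]
  have happ : (LinearMap.toContinuousLinearMap (Matrix.toEuclideanLin M))
      (EuclideanSpace.single j (1:ℝ))
      = (WithLp.equiv 2 (m → ℝ)).symm (M *ᵥ (WithLp.equiv 2 (n → ℝ))
          (EuclideanSpace.single j (1:ℝ))) := by
    simp [Matrix.toEuclideanLin_apply]
  have hcomp : (M *ᵥ (WithLp.equiv 2 (n → ℝ)) (EuclideanSpace.single j (1:ℝ))) i = M i j := by
    have : (WithLp.equiv 2 (n → ℝ)) (EuclideanSpace.single j (1:ℝ)) = Pi.single j 1 := rfl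
    rw [this]
    simp [Matrix.mulVec_single]
  have hnorm : |M i j| ≤ ‖(LinearMap.toContinuousLinearMap (Matrix.toEuclideanLin M))
      (EuclideanSpace.single j (1:ℝ))‖ := by
    rw [happ]
    have := EuclideanSpace.norm_eq ((WithLp.equiv 2 (m → ℝ)).symm (M *ᵥ (WithLp.equiv 2 (n → ℝ))
          (EuclideanSpace.single j (1:ℝ))))
    rw [this]
    have hle : |M i j|^2 ≤ ∑ k, ‖((WithLp.equiv 2 (m → ℝ)).symm (M *ᵥ (WithLp.equiv 2 (n → ℝ))
          (EuclideanSpace.single j (1:ℝ)))) k‖^2 := by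
      have : ((WithLp.equiv 2 (m → ℝ)).symm (M *ᵥ (WithLp.equiv 2 (n → ℝ))
          (EuclideanSpace.single j (1:ℝ)))) i = M i j := hcomp
      calc |M i j|^2 = ‖((WithLp.equiv 2 (m → ℝ)).symm (M *ᵥ (WithLp.equiv 2 (n → ℝ))
          (EuclideanSpace.single j (1:ℝ)))) i‖^2 := by rw [this]; simp [sq_abs]
        _ ≤ _ := Finset.single_le_sum (f := fun k => ‖((WithLp.equiv 2 (m → ℝ)).symm
            (M *ᵥ (WithLp.equiv 2 (n → ℝ)) (EuclideanSpace.single j (1:ℝ)))) k‖^2)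
            (fun k _ => by positivity) (Finset.mem_univ i)
    calc |M i j| = Real.sqrt (|M i j|^2) := by rw [Real.sqrt_sq (abs_nonneg _)]
      _ ≤ _ := Real.sqrt_le_sqrt hle
  have := ContinuousLinearMap.le_opNorm
    (LinearMap.toContinuousLinearMap (Matrix.toEuclideanLin M)) (EuclideanSpace.single j (1:ℝ))
  rw [hx, mul_one] at this
  exact hnorm.trans this

lemma sNorm_smul_le {m n : Type*} [Fintype m] [Fintype n] [DecidableEq n]
    (c : ℝ) (M : Matrix m n ℝ) : sNorm (c • M) ≤ |c| * sNorm M := by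
  unfold sNorm
  have h : LinearMap.toContinuousLinearMap (Matrix.toEuclideanLin (c • M))
      = c • LinearMap.toContinuousLinearMap (Matrix.toEuclideanLin M) := by
    simp [_root_.map_smul]
  rw [h, ← Real.norm_eq_abs]
  exact ContinuousLinearMap.opNorm_smul_le c _

lemma exists_row_aug {m' n : Type*} [Fintype m'] [Fintype n] [DecidableEq n]
    (M : Matrix m' n ℝ) (j0 : n) (s : ℝ) (hs : 0 ≤ s) (hMs : sNorm M ≤ s) :
    ∃ β : ℝ, 0 ≤ β ∧
      sNorm (Matrix.fromRows M (Matrix.of fun (_ : Fin 1) k => if k = j0 then β else 0)) = s := by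
  set Rm : ℝ → Matrix (Fin 1) n ℝ := fun β => Matrix.of fun _ k => if k = j0 then β else 0 with hRm
  set g : ℝ → ℝ := fun β => sNorm (Matrix.fromRows M (Rm β)) with hg
  have hRsmul : ∀ c : ℝ, Rm c = c • Rm 1 := by
    intro c; ext i k; simp only [hRm, Matrix.smul_apply, Matrix.of_apply, smul_eq_mul]; split <;> simp
  have hdiff : ∀ β β' : ℝ, Matrix.fromRows M (Rm β) - Matrix.fromRows M (Rm β')
      = Matrix.fromRows (0 : Matrix m' n ℝ) (Rm (β - β')) := by
    intro β β'; ext i k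
    cases i with
    | inl i => simp [Matrix.fromRows_apply_inl]
    | inr i => by_cases hk : k = j0 <;> simp [Matrix.fromRows_apply_inr, hRm, hk]
  set K : ℝ := sNorm (Matrix.fromRows (0 : Matrix m' n ℝ) (Rm 1)) with hK
  have hlip : ∀ β β' : ℝ, |g β - g β'| ≤ K * |β - β'| := by
    intro β β'
    calc |g β - g β'| ≤ sNorm (Matrix.fromRows M (Rm β) - Matrix.fromRows M (Rm β')) :=
          sNorm_abs_sub_le _ _
      _ = sNorm (Matrix.fromRows (0 : Matrix m' n ℝ) (Rm (β - β'))) := by rw [hdiff]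
      _ ≤ |β - β'| * K := by
          rw [hRsmul (β - β')]
          have heq : Matrix.fromRows (0 : Matrix m' n ℝ) ((β - β') • Rm 1)
              = (β - β') • Matrix.fromRows (0 : Matrix m' n ℝ) (Rm 1) := by
            ext i k; cases i <;> simp [Matrix.fromRows_apply_inl, Matrix.fromRows_apply_inr]
          rw [heq]; exact sNorm_smul_le _ _
      _ = K * |β - β'| := mul_comm _ _
  have hcont : Continuous g := by
    have : LipschitzWith (Real.toNNReal K) g := by
      apply LipschitzWith.of_dist_le_mul
      intro x y
      rw [Real.dist_eq, Real.dist_eq]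
      calc |g x - g y| ≤ K * |x - y| := hlip x y
        _ ≤ (Real.toNNReal K) * |x - y| := by
            apply mul_le_mul_of_nonneg_right _ (abs_nonneg _)
            exact le_of_eq (Real.coe_toNNReal K (sNorm_nonneg _)).symm
    exact this.continuous
  have hg0 : g 0 = sNorm M := by
    apply sNorm_eq_of_gram_eq
    have hR0 : Rm 0 = 0 := by ext i k; simp [hRm]
    rw [hR0, Matrix.transpose_fromRows, Matrix.fromCols_mul_fromRows]
    simp
  have hgs : ∀ β : ℝ, β ≤ g β := by
    intro β
    have := abs_le_sNorm_of_unit (Matrix.fromRows M (Rm β)) j0 (Sum.inr 0)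
    have h1 : (Matrix.fromRows M (Rm β)) (Sum.inr 0) j0 = β := by simp [Matrix.fromRows_apply_inr, hRm]
    rw [h1] at this
    exact (le_abs_self β).trans this
  have hmem : s ∈ Set.Icc (g 0) (g s) := ⟨hg0 ▸ hMs, hgs s⟩
  have := intermediate_value_Icc hs hcont.continuousOn hmem
  obtain ⟨β, hβmem, hβ⟩ := this
  exact ⟨β, hβmem.1, hβ⟩


lemma psd_smul {ι : Type*} [Fintype ι] {c : ℝ} (hc : 0 ≤ c) {M : Matrix ι ι ℝ}
    (hM : M.PosSemidef) : (c • M).PosSemidef := by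
  rw [Matrix.posSemidef_iff_dotProduct_mulVec] at hM ⊢
  constructor
  · rw [Matrix.IsHermitian, Matrix.conjTranspose_smul, hM.1]
    congr 1
  · intro x
    have := hM.2 x
    have h : star x ⬝ᵥ (c • M) *ᵥ x = c * (star x ⬝ᵥ M *ᵥ x) := by
      rw [Matrix.smul_mulVec, dotProduct_smul, smul_eq_mul]
    rw [h]
    positivity

lemma psd_trace_nonneg {ι : Type*} [Fintype ι] [DecidableEq ι] {M : Matrix ι ι ℝ}
    (hM : M.PosSemidef) : 0 ≤ M.trace := by
  rw [Matrix.trace]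
  apply Finset.sum_nonneg
  intro i _
  have := hM.dotProduct_mulVec_nonneg (Pi.single i 1)
  simpa [dotProduct, Matrix.mulVec, Pi.single_apply] using this

lemma inv_antitone {ι : Type*} [Fintype ι] [DecidableEq ι] {A B : Matrix ι ι ℝ}
    (hA : A.PosDef) (hB : B.PosDef) (hAB : (B - A).PosSemidef) :
    (A⁻¹ - B⁻¹).PosSemidef := by
  haveI : Invertible A := Matrix.invertibleOfIsUnitDet A hA.det_pos.ne'.isUnit
  haveI : Invertible B := Matrix.invertibleOfIsUnitDet B hB.det_pos.ne'.isUnit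
  have hAH : Aᴴ = A := hA.isHermitian
  have blocksPSD : (Matrix.fromBlocks A A Aᴴ B).PosSemidef := by
    rw [Matrix.PosDef.fromBlocks₁₁ A B hA]
    have : B - Aᴴ * A⁻¹ * A = B - A := by
      rw [hAH, Matrix.mul_assoc, Matrix.nonsing_inv_mul A hA.det_pos.ne'.isUnit, Matrix.mul_one]
    rw [this]; exact hAB
  have step2 : (A - A * B⁻¹ * Aᴴ).PosSemidef := by
    rw [← Matrix.PosDef.fromBlocks₂₂ A A hB]
    rwa [hAH] at blocksPSD ⊢
  rw [hAH] at step2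
  have conj := step2.mul_mul_conjTranspose_same A⁻¹
  have hAinvH : (A⁻¹)ᴴ = A⁻¹ := by rw [Matrix.conjTranspose_nonsing_inv, hAH]
  rw [hAinvH] at conj
  have key : A⁻¹ * (A - A * B⁻¹ * A) * A⁻¹ = A⁻¹ - B⁻¹ := by
    rw [Matrix.mul_sub, Matrix.sub_mul]
    rw [Matrix.nonsing_inv_mul A hA.det_pos.ne'.isUnit]
    have h2 : A⁻¹ * (A * B⁻¹ * A) = B⁻¹ * A := by
      rw [← Matrix.mul_assoc, ← Matrix.mul_assoc, Matrix.nonsing_inv_mul A hA.det_pos.ne'.isUnit,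
        Matrix.one_mul]
    rw [h2, Matrix.one_mul, Matrix.mul_assoc, Matrix.mul_nonsing_inv A hA.det_pos.ne'.isUnit,
      Matrix.mul_one]
  rwa [key] at conj

lemma posDef_blockDiagonal' {n : ℕ} {p : Fin n → ℕ}
    (Vb : ∀ i : Fin n, Matrix (Fin (p i)) (Fin (p i)) ℝ) (hVb : ∀ i, (Vb i).PosDef) :
    (Matrix.blockDiagonal' Vb).PosDef := by
  rw [Matrix.posDef_iff_dotProduct_mulVec]
  constructor
  · rw [Matrix.IsHermitian]
    ext ⟨i, k⟩ ⟨i', k'⟩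
    by_cases h : i = i'
    · subst h
      simp [Matrix.conjTranspose_apply, Matrix.blockDiagonal'_apply]
      exact ((hVb i).isHermitian.apply k' k).symm ▸ ((hVb i).isHermitian.apply k' k)
    · simp [Matrix.conjTranspose_apply, Matrix.blockDiagonal'_apply, h, Ne.symm h]
  · intro x hx
    have hsum : star x ⬝ᵥ (Matrix.blockDiagonal' Vb) *ᵥ x
        = ∑ i : Fin n, (star (fun k => x ⟨i, k⟩) ⬝ᵥ (Vb i) *ᵥ (fun k => x ⟨i, k⟩)) := by
      rw [dotProduct]
      rw [← Finset.univ_sigma_univ, Finset.sum_sigma]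
      apply Finset.sum_congr rfl
      intro i _
      rw [dotProduct]
      apply Finset.sum_congr rfl
      intro k _
      congr 1
      rw [Matrix.mulVec, dotProduct, ← Finset.univ_sigma_univ, Finset.sum_sigma]
      rw [Matrix.mulVec, dotProduct]
      rw [Finset.sum_eq_single i]
      · apply Finset.sum_congr rfl
        intro k' _
        simp [Matrix.blockDiagonal'_apply]
      · intro i' _ hi'
        apply Finset.sum_eq_zero
        intro k' _
        simp [Matrix.blockDiagonal'_apply, Ne.symm hi']
      · intro h; exact absurd (Finset.mem_univ i) h
    rw [hsum]
    obtain ⟨⟨i0, k0⟩, hk0⟩ : ∃ j, x j ≠ 0 := by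
      by_contra h
      push_neg at h
      exact hx (funext h)
    apply Finset.sum_pos'
    · intro i _
      exact (hVb i).posSemidef.dotProduct_mulVec_nonneg _
    · refine ⟨i0, Finset.mem_univ _, ?_⟩
      apply Matrix.PosDef.dotProduct_mulVec_pos (hVb i0)
      intro h
      exact hk0 (congrFun h k0)


lemma pi_psd {ι : Type*} [Fintype ι] [DecidableEq ι] {V N : Matrix ι ι ℝ}
    (hV : V.PosDef) (hN : N.PosSemidef) :
    (V⁻¹ - V⁻¹ * (V⁻¹ + N)⁻¹ * V⁻¹).PosSemidef := by
  have hVi : (V⁻¹).PosDef := hV.inv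
  have hVN : (V⁻¹ + N).PosDef := hVi.add_posSemidef hN
  have h1 : ((V⁻¹)⁻¹ - (V⁻¹ + N)⁻¹).PosSemidef := by
    apply inv_antitone hVi hVN
    have : V⁻¹ + N - V⁻¹ = N := by abel
    rw [this]; exact hN
  rw [Matrix.nonsing_inv_nonsing_inv V hV.det_pos.ne'.isUnit] at h1
  have conj := h1.mul_mul_conjTranspose_same V⁻¹
  have hViH : (V⁻¹)ᴴ = V⁻¹ := by
    rw [Matrix.conjTranspose_nonsing_inv, hV.isHermitian]
  rw [hViH] at conj
  have key : V⁻¹ * (V - (V⁻¹ + N)⁻¹) * V⁻¹ = V⁻¹ - V⁻¹ * (V⁻¹ + N)⁻¹ * V⁻¹ := by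
    rw [Matrix.mul_sub, Matrix.sub_mul, Matrix.nonsing_inv_mul V hV.det_pos.ne'.isUnit,
      Matrix.one_mul]
  rwa [key] at conj

lemma pi_mono {ι : Type*} [Fintype ι] [DecidableEq ι] {V N N' : Matrix ι ι ℝ}
    (hV : V.PosDef) (hN : N.PosSemidef) (hN' : N'.PosSemidef) (hNN' : (N' - N).PosSemidef) :
    ((V⁻¹ - V⁻¹ * (V⁻¹ + N')⁻¹ * V⁻¹) - (V⁻¹ - V⁻¹ * (V⁻¹ + N)⁻¹ * V⁻¹)).PosSemidef := by
  have hVi : (V⁻¹).PosDef := hV.inv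
  have hVN : (V⁻¹ + N).PosDef := hVi.add_posSemidef hN
  have hVN' : (V⁻¹ + N').PosDef := hVi.add_posSemidef hN'
  have h1 : ((V⁻¹ + N)⁻¹ - (V⁻¹ + N')⁻¹).PosSemidef := by
    apply inv_antitone hVN hVN'
    have : V⁻¹ + N' - (V⁻¹ + N) = N' - N := by abel
    rw [this]; exact hNN'
  have conj := h1.mul_mul_conjTranspose_same V⁻¹
  have hViH : (V⁻¹)ᴴ = V⁻¹ := by
    rw [Matrix.conjTranspose_nonsing_inv, hV.isHermitian]
  rw [hViH] at conj
  have key : V⁻¹ * ((V⁻¹ + N)⁻¹ - (V⁻¹ + N')⁻¹) * V⁻¹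
      = (V⁻¹ - V⁻¹ * (V⁻¹ + N')⁻¹ * V⁻¹) - (V⁻¹ - V⁻¹ * (V⁻¹ + N)⁻¹ * V⁻¹) := by
    rw [Matrix.mul_sub, Matrix.sub_mul]
    abel
  rwa [key] at conj

lemma sig_chain {m : ℕ} {P : Type*} [Fintype P] [DecidableEq P]
    (A W : ℕ → Matrix (Fin m) (Fin m) ℝ) (C : ℕ → Matrix P (Fin m) ℝ)
    (Sbar0 : Matrix (Fin m) (Fin m) ℝ)
    (hW : ∀ t, (W t).PosDef) (hS : Sbar0.PosDef)
    {Pi Pi' : Matrix P P ℝ} (hQ : Pi.PosSemidef) (hQ' : Pi'.PosSemidef)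
    (hm : (Pi' - Pi).PosSemidef) :
    ∀ t, (SigSeq A W C Sbar0 Pi t).PosDef ∧ (SigSeq A W C Sbar0 Pi' t).PosDef ∧
      ((SigSeq A W C Sbar0 Pi t) - (SigSeq A W C Sbar0 Pi' t)).PosSemidef := by
  have conjPSD : ∀ (t : ℕ) (Q : Matrix P P ℝ), Q.PosSemidef → ((C t)ᵀ * Q * C t).PosSemidef :=
    fun t Q hQ => hQ.conjTranspose_mul_mul_same (C t)
  intro t
  induction t with
  | zero =>
    have hX : (Sbar0⁻¹ + (C 0)ᵀ * Pi * C 0).PosDef := hS.inv.add_posSemidef (conjPSD 0 _ hQ)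
    have hX' : (Sbar0⁻¹ + (C 0)ᵀ * Pi' * C 0).PosDef := hS.inv.add_posSemidef (conjPSD 0 _ hQ')
    refine ⟨hX.inv, hX'.inv, ?_⟩
    apply inv_antitone hX hX'
    have : (Sbar0⁻¹ + (C 0)ᵀ * Pi' * C 0) - (Sbar0⁻¹ + (C 0)ᵀ * Pi * C 0)
        = (C 0)ᵀ * (Pi' - Pi) * C 0 := by
      rw [Matrix.mul_sub, Matrix.sub_mul]; abel
    rw [this]; exact conjPSD 0 _ hm
  | succ t ih =>
    obtain ⟨hPD, hPD', hdiff⟩ := ih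
    set S := SigSeq A W C Sbar0 Pi t
    set S' := SigSeq A W C Sbar0 Pi' t
    have hY : (A t * S * (A t)ᵀ + W t).PosDef :=
      Matrix.PosDef.posSemidef_add (hPD.posSemidef.mul_mul_conjTranspose_same (A t)) (hW t)
    have hY' : (A t * S' * (A t)ᵀ + W t).PosDef :=
      Matrix.PosDef.posSemidef_add (hPD'.posSemidef.mul_mul_conjTranspose_same (A t)) (hW t)
    have hYdiff : ((A t * S * (A t)ᵀ + W t) - (A t * S' * (A t)ᵀ + W t)).PosSemidef := by
      have : (A t * S * (A t)ᵀ + W t) - (A t * S' * (A t)ᵀ + W t)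
          = A t * (S - S') * (A t)ᵀ := by
        rw [Matrix.mul_sub, Matrix.sub_mul]; abel
      rw [this]; exact hdiff.mul_mul_conjTranspose_same (A t)
    have hinv : ((A t * S' * (A t)ᵀ + W t)⁻¹ - (A t * S * (A t)ᵀ + W t)⁻¹).PosSemidef :=
      inv_antitone hY' hY hYdiff
    have hZ : ((A t * S * (A t)ᵀ + W t)⁻¹ + (C (t+1))ᵀ * Pi * C (t+1)).PosDef :=
      hY.inv.add_posSemidef (conjPSD (t+1) _ hQ)
    have hZ' : ((A t * S' * (A t)ᵀ + W t)⁻¹ + (C (t+1))ᵀ * Pi' * C (t+1)).PosDef :=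
      hY'.inv.add_posSemidef (conjPSD (t+1) _ hQ')
    have hZdiff : (((A t * S' * (A t)ᵀ + W t)⁻¹ + (C (t+1))ᵀ * Pi' * C (t+1))
        - ((A t * S * (A t)ᵀ + W t)⁻¹ + (C (t+1))ᵀ * Pi * C (t+1))).PosSemidef := by
      have : ((A t * S' * (A t)ᵀ + W t)⁻¹ + (C (t+1))ᵀ * Pi' * C (t+1))
          - ((A t * S * (A t)ᵀ + W t)⁻¹ + (C (t+1))ᵀ * Pi * C (t+1))
          = ((A t * S' * (A t)ᵀ + W t)⁻¹ - (A t * S * (A t)ᵀ + W t)⁻¹)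
            + (C (t+1))ᵀ * (Pi' - Pi) * C (t+1) := by
        rw [Matrix.mul_sub, Matrix.sub_mul]; abel
      rw [this]; exact hinv.add (conjPSD (t+1) _ hm)
    exact ⟨hZ.inv, hZ'.inv, inv_antitone hZ hZ' hZdiff⟩

lemma sNorm_zero {m n : Type*} [Fintype m] [Fintype n] [DecidableEq n] :
    sNorm (0 : Matrix m n ℝ) = 0 := by
  unfold sNorm
  rw [map_zero, map_zero, norm_zero]

/-- Generalized column block for arbitrary row type. -/
def blkG {m' : Type*} {n : ℕ} {p : Fin n → ℕ} (D : Matrix m' ((i : Fin n) × Fin (p i)) ℝ)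
    (i : Fin n) : Matrix m' (Fin (p i)) ℝ :=
  Matrix.of fun r j => D r ⟨i, j⟩

end Aux

/-- **Lemma 1 of the paper.** For every nonzero `D` there is a nonzero `D̃` whose blocks
all saturate the sensitivity, `ρ_i‖D̃_i‖₂ = Δ₂D̃ = Δ₂D`, and whose Kalman error covariances
satisfy `Σ_t(D̃) ⪯ Σ_t(D)` for `0 ≤ t ≤ T`; hence the total trace cost does not increase. -/
theorem stmt_7 {n m r : ℕ} (hn : 1 ≤ n) (p : Fin n → ℕ) (hp : ∀ i, 0 < p i)
    (ρ : Fin n → ℝ) (hρ : ∀ i, 0 < ρ i) (κ : ℝ) (hκ : 0 < κ)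
    (Vb : ∀ i : Fin n, Matrix (Fin (p i)) (Fin (p i)) ℝ)
    (hVb : ∀ i, (Vb i).PosDef)
    (V : Matrix ((i : Fin n) × Fin (p i)) ((i : Fin n) × Fin (p i)) ℝ)
    (hV : V = Matrix.blockDiagonal' Vb)
    (T : ℕ)
    (A : ℕ → Matrix (Fin m) (Fin m) ℝ)
    (C : ℕ → Matrix ((i : Fin n) × Fin (p i)) (Fin m) ℝ)
    (L : ℕ → Matrix (Fin r) (Fin m) ℝ)
    (W : ℕ → Matrix (Fin m) (Fin m) ℝ) (hW : ∀ t, (W t).PosDef)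
    (Sbar0 : Matrix (Fin m) (Fin m) ℝ) (hSbar0 : Sbar0.PosDef)
    (q : ℕ) (D : Matrix (Fin q) ((i : Fin n) × Fin (p i)) ℝ) (hD : D ≠ 0) :
    ∃ (q' : ℕ) (D' : Matrix (Fin q') ((i : Fin n) × Fin (p i)) ℝ),
      D' ≠ 0 ∧
      (∀ i : Fin n, ρ i * sNorm (blk D' i) = Delta2 ρ D') ∧
      Delta2 ρ D' = Delta2 ρ D ∧
      (∀ t ≤ T,
        (SigSeq A W C Sbar0 (PiOf V κ ρ D) t
          - SigSeq A W C Sbar0 (PiOf V κ ρ D') t).PosSemidef) ∧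
      ∑ t ∈ Finset.range (T + 1),
          (L t * SigSeq A W C Sbar0 (PiOf V κ ρ D') t * (L t)ᵀ).trace
        ≤ ∑ t ∈ Finset.range (T + 1),
            (L t * SigSeq A W C Sbar0 (PiOf V κ ρ D) t * (L t)ᵀ).trace := by
  classical
  haveI : Nonempty (Fin n) := ⟨⟨0, hn⟩⟩
  set Δ := Delta2 ρ D with hΔdef
  have hbdd : BddAbove (Set.range fun i : Fin n => ρ i * sNorm (blk D i)) :=
    (Set.finite_range _).bddAbove
  have hle : ∀ i, ρ i * sNorm (blk D i) ≤ Δ := fun i => le_ciSup hbdd i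
  have hΔpos : 0 < Δ := by
    obtain ⟨r0, ⟨i1, k1⟩, hval⟩ : ∃ r j, D r j ≠ 0 := by
      by_contra h; push_neg at h; exact hD (by ext r j; simpa using h r j)
    have hblk : blk D i1 ≠ 0 := by
      intro h0
      exact hval (by simpa [blk] using congrFun (congrFun h0 r0) k1)
    exact lt_of_lt_of_le (mul_pos (hρ i1) (sNorm_pos_of_ne_zero hblk)) (hle i1)
  have hMs : ∀ i, sNorm (blk D i) ≤ Δ / ρ i := fun i =>
    (le_div_iff₀ (hρ i)).mpr (by rw [mul_comm]; exact hle i)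
  have hs0 : ∀ i, (0:ℝ) ≤ Δ / ρ i := fun i => le_of_lt (div_pos hΔpos (hρ i))
  choose β hβ0 hβ using fun i : Fin n =>
    exists_row_aug (blk D i) (⟨0, hp i⟩ : Fin (p i)) (Δ / ρ i) (hs0 i) (hMs i)
  set F : Matrix (Fin n) ((i : Fin n) × Fin (p i)) ℝ :=
    Matrix.of (fun i' j => if j.1 = i' ∧ (j.2 : ℕ) = 0 then β j.1 else 0) with hF
  set E : Matrix (Fin q ⊕ Fin n) ((i : Fin n) × Fin (p i)) ℝ := Matrix.fromRows D F with hE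
  set e : Fin (q + n) ≃ (Fin q ⊕ Fin n) := finSumFinEquiv.symm with he
  set D' : Matrix (Fin (q + n)) ((i : Fin n) × Fin (p i)) ℝ := E.submatrix ⇑e id with hD'
  have hD'gram : D'ᵀ * D' = Dᵀ * D + Fᵀ * F := by
    have h1 : D'ᵀ * D' = (Eᵀ * E).submatrix id id := by
      rw [hD', Matrix.transpose_submatrix, Matrix.submatrix_mul_equiv]
    rw [h1, Matrix.submatrix_id_id, hE, Matrix.transpose_fromRows,
      Matrix.fromCols_mul_fromRows]
  have hblkE : ∀ i, blkG E i = Matrix.fromRows (blk D i) (blkG F i) := by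
    intro i; ext x j
    cases x with
    | inl u => rfl
    | inr u => rfl
  have hgrami : ∀ i, (blk D' i)ᵀ * (blk D' i) = (blkG E i)ᵀ * (blkG E i) := by
    intro i
    have : blk D' i = (blkG E i).submatrix ⇑e id := rfl
    rw [this, Matrix.transpose_submatrix, Matrix.submatrix_mul_equiv, Matrix.submatrix_id_id]
  have hFgram : ∀ i, (blkG F i)ᵀ * (blkG F i)
      = (Matrix.of fun (_ : Fin 1) k => if k = (⟨0, hp i⟩ : Fin (p i)) then β i else 0)ᵀ
        * (Matrix.of fun (_ : Fin 1) k => if k = (⟨0, hp i⟩ : Fin (p i)) then β i else 0) := by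
    intro i
    ext k k'
    rw [Matrix.mul_apply, Matrix.mul_apply, Fin.sum_univ_one]
    rw [Finset.sum_eq_single i]
    · simp only [Matrix.transpose_apply, Matrix.of_apply, blkG, hF, Fin.ext_iff, Fin.val_zero]
      simp
    · intro b _ hb
      simp only [Matrix.transpose_apply, Matrix.of_apply, blkG, hF]
      rw [if_neg (fun h => hb h.1.symm), zero_mul]
    · intro hmem; exact absurd (Finset.mem_univ i) hmem
  have hsnormblk : ∀ i, sNorm (blk D' i) = Δ / ρ i := by
    intro i
    have heq : sNorm (blk D' i) = sNorm (Matrix.fromRows (blk D i)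
        (Matrix.of fun (_ : Fin 1) k => if k = (⟨0, hp i⟩ : Fin (p i)) then β i else 0)) := by
      apply sNorm_eq_of_gram_eq
      rw [hgrami i, hblkE i, Matrix.transpose_fromRows, Matrix.fromCols_mul_fromRows,
        Matrix.transpose_fromRows, Matrix.fromCols_mul_fromRows, hFgram i]
    rw [heq, hβ i]
  have hsat : ∀ i, ρ i * sNorm (blk D' i) = Δ := by
    intro i
    rw [hsnormblk i, mul_comm, div_mul_cancel₀ _ (hρ i).ne']
  have hD'delta : Delta2 ρ D' = Δ := by
    unfold Delta2
    simp only [hsat]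
    exact ciSup_const
  have hD'ne : D' ≠ 0 := by
    intro h0
    have h1 : blk D' ⟨0, hn⟩ = 0 := by
      rw [h0]; ext u j; rfl
    have h2 := hsnormblk ⟨0, hn⟩
    rw [h1, sNorm_zero] at h2
    exact absurd h2.symm (ne_of_gt (div_pos hΔpos (hρ _)))
  -- matrix monotonicity part
  set c : ℝ := (κ * Δ)^2 with hc
  have hcpos : 0 < c := pow_pos (mul_pos hκ hΔpos) 2
  have hcinv : (0:ℝ) ≤ c⁻¹ := inv_nonneg.mpr hcpos.le
  have hVpd : V.PosDef := hV ▸ posDef_blockDiagonal' Vb hVb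
  have hFpsd : (Fᵀ * F).PosSemidef := Matrix.posSemidef_conjTranspose_mul_self F
  have hN : (c⁻¹ • (Dᵀ * D)).PosSemidef :=
    psd_smul hcinv (Matrix.posSemidef_conjTranspose_mul_self D)
  have hN' : (c⁻¹ • (D'ᵀ * D')).PosSemidef :=
    psd_smul hcinv (Matrix.posSemidef_conjTranspose_mul_self D')
  have hdiffN : (c⁻¹ • (D'ᵀ * D') - c⁻¹ • (Dᵀ * D)).PosSemidef := by
    have h3 : c⁻¹ • (D'ᵀ * D') - c⁻¹ • (Dᵀ * D) = c⁻¹ • (Fᵀ * F) := by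
      rw [hD'gram, smul_add]; abel
    rw [h3]; exact psd_smul hcinv hFpsd
  have hPiDeq : PiOf V κ ρ D = V⁻¹ - V⁻¹ * (V⁻¹ + c⁻¹ • (Dᵀ * D))⁻¹ * V⁻¹ := by
    unfold PiOf; rw [← hΔdef, ← hc]
  have hPiD'eq : PiOf V κ ρ D' = V⁻¹ - V⁻¹ * (V⁻¹ + c⁻¹ • (D'ᵀ * D'))⁻¹ * V⁻¹ := by
    unfold PiOf; rw [hD'delta, ← hc]
  have hPiD : (PiOf V κ ρ D).PosSemidef := by rw [hPiDeq]; exact pi_psd hVpd hN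
  have hPiD' : (PiOf V κ ρ D').PosSemidef := by rw [hPiD'eq]; exact pi_psd hVpd hN'
  have hPimono : (PiOf V κ ρ D' - PiOf V κ ρ D).PosSemidef := by
    rw [hPiDeq, hPiD'eq]; exact pi_mono hVpd hN hN' hdiffN
  have chain := sig_chain A W C Sbar0 hW hSbar0 hPiD hPiD' hPimono
  refine ⟨q + n, D', hD'ne, ?_, ?_, ?_, ?_⟩
  · intro i; rw [hD'delta]; exact hsat i
  · rw [hD'delta]
  · intro t _; exact (chain t).2.2
  · apply Finset.sum_le_sum
    intro t _
    have hd := (chain t).2.2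
    have h1 : (L t * (SigSeq A W C Sbar0 (PiOf V κ ρ D) t) * (L t)ᵀ)
        - (L t * (SigSeq A W C Sbar0 (PiOf V κ ρ D') t) * (L t)ᵀ)
        = L t * ((SigSeq A W C Sbar0 (PiOf V κ ρ D) t)
            - (SigSeq A W C Sbar0 (PiOf V κ ρ D') t)) * (L t)ᵀ := by
      rw [Matrix.mul_sub, Matrix.sub_mul]
    rw [← sub_nonneg, ← Matrix.trace_sub, h1]
    exact psd_trace_nonneg (hd.mul_mul_conjTranspose_same (L t))
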